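/- For any finite nonempty collections {X_f : f ∈ F} and {Y_g : g ∈ G} of teams on a fixed finite index set N = {i₁,…,iₙ}, the following are equivalent: (a) ⋁_{f∈F} Θ*_{X_f} ⊨ ⋁_{g∈G} Θ*_{Y_g}; (b) for each f ∈ F there exists g ∈ G with X_f = Y_g. -/

import Mathlib

/-- Formulas of full propositional team logic (FPT), with propositional
variables indexed by a type `V`. -/
inductive PTForm (V : Type) : Type where
  | pos : V → PTForm V
  | neg : V → PTForm V
  | bot : PTForm V
  | ne : PTForm V
  | dep : List V → V → PTForm V
  | indep : List V → List V → PTForm V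
  | incl : List V → List V → PTForm V
  | and : PTForm V → PTForm V → PTForm V
  | tensor : PTForm V → PTForm V → PTForm V
  | nsor : PTForm V → PTForm V → PTForm V
  | bor : PTForm V → PTForm V → PTForm V

/-- Team semantics of full propositional team logic.  A valuation is a
function `V → Bool` and a team is a set of valuations. -/
def PTSat {V : Type} (X : Set (V → Bool)) : PTForm V → Prop
  | .pos i => ∀ s ∈ X, s i = true
  | .neg i => ∀ s ∈ X, s i = false
  | .bot => X = ∅
  | .ne => X ≠ ∅
  | .dep xs y => ∀ s ∈ X, ∀ s' ∈ X, (∀ i ∈ xs, s i = s' i) → s y = s' y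
  | .indep xs ys =>
      ∀ s ∈ X, ∀ s' ∈ X, ∃ s'' ∈ X,
        (∀ i ∈ xs, s'' i = s i) ∧ (∀ j ∈ ys, s'' j = s' j)
  | .incl xs ys => ∀ s ∈ X, ∃ s' ∈ X, ∀ p ∈ List.zip xs ys, s p.1 = s' p.2
  | .and φ ψ => PTSat X φ ∧ PTSat X ψ
  | .tensor φ ψ => ∃ Y Z, X = Y ∪ Z ∧ PTSat Y φ ∧ PTSat Z ψ
  | .nsor φ ψ =>
      X = ∅ ∨ ∃ Y Z, X = Y ∪ Z ∧ Y.Nonempty ∧ Z.Nonempty ∧ PTSat Y φ ∧ PTSat Z ψ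
  | .bor φ ψ => PTSat X φ ∨ PTSat X ψ

/-- The set of propositional variables occurring in a formula. -/
def PTForm.vars {V : Type} : PTForm V → Set V
  | .pos i => {i}
  | .neg i => {i}
  | .bot => ∅
  | .ne => ∅
  | .dep xs y => {i | i ∈ xs} ∪ {y}
  | .indep xs ys => {i | i ∈ xs} ∪ {j | j ∈ ys}
  | .incl xs ys => {i | i ∈ xs} ∪ {j | j ∈ ys}
  | .and φ ψ => φ.vars ∪ ψ.vars
  | .tensor φ ψ => φ.vars ∪ ψ.vars
  | .nsor φ ψ => φ.vars ∪ ψ.vars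
  | .bor φ ψ => φ.vars ∪ ψ.vars

/-- The formula does not contain the atom NE. -/
def PTForm.NEfree {V : Type} : PTForm V → Prop
  | .ne => False
  | .and φ ψ => φ.NEfree ∧ ψ.NEfree
  | .tensor φ ψ => φ.NEfree ∧ ψ.NEfree
  | .nsor φ ψ => φ.NEfree ∧ ψ.NEfree
  | .bor φ ψ => φ.NEfree ∧ ψ.NEfree
  | _ => True

/-- Classical formulas: built from `pᵢ`, `¬pᵢ`, `⊥` using only `∧` and `⊗`. -/
inductive IsClassical {V : Type} : PTForm V → Prop where
  | pos (i : V) : IsClassical (.pos i)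
  | neg (i : V) : IsClassical (.neg i)
  | bot : IsClassical .bot
  | and : ∀ {φ ψ}, IsClassical φ → IsClassical ψ → IsClassical (.and φ ψ)
  | tensor : ∀ {φ ψ}, IsClassical φ → IsClassical ψ → IsClassical (.tensor φ ψ)

/-- The language of strong propositional team logic PT⁺:
atoms `pᵢ`, `¬pᵢ`, `⊥`, `NE` and connectives `∧`, `⊗`, `∨`. -/
inductive IsPTPlus {V : Type} : PTForm V → Prop where
  | pos (i : V) : IsPTPlus (.pos i)
  | neg (i : V) : IsPTPlus (.neg i)
  | bot : IsPTPlus .bot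
  | ne : IsPTPlus .ne
  | and : ∀ {φ ψ}, IsPTPlus φ → IsPTPlus ψ → IsPTPlus (.and φ ψ)
  | tensor : ∀ {φ ψ}, IsPTPlus φ → IsPTPlus ψ → IsPTPlus (.tensor φ ψ)
  | bor : ∀ {φ ψ}, IsPTPlus φ → IsPTPlus ψ → IsPTPlus (.bor φ ψ)

/-- The language of propositional team logic PT:
atoms `pᵢ`, `¬pᵢ`, `⊥` and connectives `∧`, `⊛`, `∨`. -/
inductive IsPT {V : Type} : PTForm V → Prop where
  | pos (i : V) : IsPT (.pos i)
  | neg (i : V) : IsPT (.neg i)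
  | bot : IsPT .bot
  | and : ∀ {φ ψ}, IsPT φ → IsPT ψ → IsPT (.and φ ψ)
  | nsor : ∀ {φ ψ}, IsPT φ → IsPT ψ → IsPT (.nsor φ ψ)
  | bor : ∀ {φ ψ}, IsPT φ → IsPT ψ → IsPT (.bor φ ψ)

/-- The language of propositional union closed logic PU:
atoms `pᵢ`, `¬pᵢ`, `⊥` and connectives `∧`, `⊗`, `⊛`. -/
inductive IsPU {V : Type} : PTForm V → Prop where
  | pos (i : V) : IsPU (.pos i)
  | neg (i : V) : IsPU (.neg i)
  | bot : IsPU .bot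
  | and : ∀ {φ ψ}, IsPU φ → IsPU ψ → IsPU (.and φ ψ)
  | tensor : ∀ {φ ψ}, IsPU φ → IsPU ψ → IsPU (.tensor φ ψ)
  | nsor : ∀ {φ ψ}, IsPU φ → IsPU ψ → IsPU (.nsor φ ψ)

/-- The language of strong propositional union closed logic PU⁺:
atoms `pᵢ`, `¬pᵢ`, `⊥`, `NE` and connectives `∧`, `⊗`, `⊛`. -/
inductive IsPUPlus {V : Type} : PTForm V → Prop where
  | pos (i : V) : IsPUPlus (.pos i)
  | neg (i : V) : IsPUPlus (.neg i)
  | bot : IsPUPlus .bot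
  | ne : IsPUPlus .ne
  | and : ∀ {φ ψ}, IsPUPlus φ → IsPUPlus ψ → IsPUPlus (.and φ ψ)
  | tensor : ∀ {φ ψ}, IsPUPlus φ → IsPUPlus ψ → IsPUPlus (.tensor φ ψ)
  | nsor : ∀ {φ ψ}, IsPUPlus φ → IsPUPlus ψ → IsPUPlus (.nsor φ ψ)

/-- The atom-free team language: atoms `pᵢ`, `¬pᵢ`, `⊥`, `NE` and
connectives `∧`, `⊗`, `⊛`, `∨` (no dependence/independence/inclusion atoms). -/
inductive IsAtomFree {V : Type} : PTForm V → Prop where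
  | pos (i : V) : IsAtomFree (.pos i)
  | neg (i : V) : IsAtomFree (.neg i)
  | bot : IsAtomFree .bot
  | ne : IsAtomFree .ne
  | and : ∀ {φ ψ}, IsAtomFree φ → IsAtomFree ψ → IsAtomFree (.and φ ψ)
  | tensor : ∀ {φ ψ}, IsAtomFree φ → IsAtomFree ψ → IsAtomFree (.tensor φ ψ)
  | nsor : ∀ {φ ψ}, IsAtomFree φ → IsAtomFree ψ → IsAtomFree (.nsor φ ψ)
  | bor : ∀ {φ ψ}, IsAtomFree φ → IsAtomFree ψ → IsAtomFree (.bor φ ψ)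

/-- The literal `pᵢ^{s(i)}`, i.e. `pᵢ` if `s i = 1` and `¬pᵢ` if `s i = 0`. -/
def PTlit {V : Type} (s : V → Bool) (i : V) : PTForm V :=
  if s i then .pos i else .neg i

/-- Conjunction of a nonempty list headed by the first argument. -/
def PTandAux {V : Type} : PTForm V → List (PTForm V) → PTForm V
  | φ, [] => φ
  | φ, ψ :: l => .and φ (PTandAux ψ l)

/-- Conjunction of a list of formulas (only used on nonempty lists). -/
def PTandList {V : Type} : List (PTForm V) → PTForm V
  | [] => .bot
  | φ :: l => PTandAux φ l

/-- The formula `p_{i₁}^{s(i₁)} ∧ … ∧ p_{iₙ}^{s(iₙ)}` describing the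
valuation `s`, where `{i₁, …, iₙ}` enumerates all of `V`. -/
noncomputable def PTdescr {V : Type} [Fintype V] (s : V → Bool) : PTForm V :=
  PTandList ((Finset.univ : Finset V).toList.map (PTlit s))

/-- Tensor disjunction `⊗` of a list of formulas; the empty tensor
disjunction is `⊥`. -/
def PTtensorList {V : Type} (l : List (PTForm V)) : PTForm V :=
  l.foldr PTForm.tensor PTForm.bot

/-- Nonempty disjunction `⊛` of a nonempty list headed by the first argument. -/
def PTnsorAux {V : Type} : PTForm V → List (PTForm V) → PTForm V
  | φ, [] => φ
  | φ, ψ :: l => .nsor φ (PTnsorAux ψ l)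

/-- Nonempty disjunction `⊛` of a list of formulas; the empty nonempty
disjunction is `⊥`. -/
def PTnsorList {V : Type} : List (PTForm V) → PTForm V
  | [] => .bot
  | φ :: l => PTnsorAux φ l

/-- Boolean disjunction `∨` of a list of formulas; the empty Boolean
disjunction is `⊥ ∧ NE`. -/
def PTborList {V : Type} (l : List (PTForm V)) : PTForm V :=
  l.foldr PTForm.bor (PTForm.and PTForm.bot PTForm.ne)

/-- The formula `Θ_X := ⊗_{s∈X} (p_{i₁}^{s(i₁)} ∧ … ∧ p_{iₙ}^{s(iₙ)})`. -/
noncomputable def PTtheta {V : Type} [Fintype V] (X : Finset (V → Bool)) : PTForm V :=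
  PTtensorList (X.toList.map PTdescr)

/-- The formula `Θ*_X := ⊗_{s∈X} (p_{i₁}^{s(i₁)} ∧ … ∧ p_{iₙ}^{s(iₙ)} ∧ NE)`. -/
noncomputable def PTthetaStar {V : Type} [Fintype V] (X : Finset (V → Bool)) : PTForm V :=
  PTtensorList (X.toList.map (fun s => .and (PTdescr s) .ne))

/-- The formula `Θ**_X := ⊛_{s∈X} (p_{i₁}^{s(i₁)} ∧ … ∧ p_{iₙ}^{s(iₙ)})`. -/
noncomputable def PTthetaSS {V : Type} [Fintype V] (X : Finset (V → Bool)) : PTForm V :=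
  PTnsorList (X.toList.map PTdescr)

/-- Logical consequence: every team satisfying all formulas of `Γ`
satisfies `φ`. -/
def PTEntails {V : Type} (Γ : Set (PTForm V)) (φ : PTForm V) : Prop :=
  ∀ X : Set (V → Bool), (∀ ψ ∈ Γ, PTSat X ψ) → PTSat X φ

/-- A team property is flat if a team is in it iff all its singleton
subteams are. -/
def IsFlat {V : Type} (P : Set (Set (V → Bool))) : Prop :=
  ∀ X : Set (V → Bool), X ∈ P ↔ ∀ s ∈ X, ({s} : Set (V → Bool)) ∈ P

/-- A team property is union closed if it is closed under unions of
nonempty subfamilies. -/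
def IsUnionClosed {V : Type} (P : Set (Set (V → Bool))) : Prop :=
  ∀ 𝒳 ⊆ P, 𝒳.Nonempty → ⋃₀ 𝒳 ∈ P

/-- The syntactic De Morgan negation of a classical formula. -/
def PTdeMorgan : PTForm ℕ → PTForm ℕ
  | .pos i => .neg i
  | .neg i => .pos i
  | .bot => .tensor (.pos 0) (.neg 0)
  | .and φ ψ => .tensor (PTdeMorgan φ) (PTdeMorgan ψ)
  | .tensor φ ψ => .and (PTdeMorgan φ) (PTdeMorgan ψ)
  | φ => φ

/-- Application of a substitution `σ` (assigning a formula to each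
propositional variable) to a formula of the atom-free team language. -/
def PTsubst (σ : ℕ → PTForm ℕ) : PTForm ℕ → PTForm ℕ
  | .pos i => σ i
  | .neg i => PTdeMorgan (σ i)
  | .and φ ψ => .and (PTsubst σ φ) (PTsubst σ ψ)
  | .tensor φ ψ => .tensor (PTsubst σ φ) (PTsubst σ ψ)
  | .nsor φ ψ => .nsor (PTsubst σ φ) (PTsubst σ ψ)
  | .bor φ ψ => .bor (PTsubst σ φ) (PTsubst σ ψ)
  | φ => φ

open Classical in
/-- The valuation `s_σ`, with `s_σ(i) = 1` iff `{s} ⊨ σ(pᵢ)`. -/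
noncomputable def PTvalSubst (σ : ℕ → PTForm ℕ) (s : ℕ → Bool) : ℕ → Bool :=
  fun i => if PTSat {s} (σ i) then true else false
lemma PTandAux_sat {V : Type} (Z : Set (V → Bool)) (φ : PTForm V) (l : List (PTForm V)) :
    PTSat Z (PTandAux φ l) ↔ PTSat Z φ ∧ ∀ ψ ∈ l, PTSat Z ψ := by
  induction l generalizing φ with
  | nil => simp [PTandAux]
  | cons ψ l ih =>
    show PTSat Z φ ∧ PTSat Z (PTandAux ψ l) ↔ _
    rw [ih]; simp only [List.mem_cons]
    constructor
    · rintro ⟨h1, h2, h3⟩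
      exact ⟨h1, fun χ hχ => hχ.elim (fun e => e ▸ h2) (h3 χ)⟩
    · rintro ⟨h1, h2⟩
      exact ⟨h1, h2 ψ (Or.inl rfl), fun χ hχ => h2 χ (Or.inr hχ)⟩

lemma PTlit_sat {V : Type} (Z : Set (V → Bool)) (s : V → Bool) (i : V) :
    PTSat Z (PTlit s i) ↔ ∀ t ∈ Z, t i = s i := by
  unfold PTlit
  cases h : s i <;> simp [h, PTSat]

lemma PTdescr_sat {V : Type} [Fintype V] [Nonempty V] (Z : Set (V → Bool))
    (s : V → Bool) : PTSat Z (PTdescr s) ↔ ∀ t ∈ Z, t = s := by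
  unfold PTdescr
  rcases h : (Finset.univ : Finset V).toList.map (PTlit s) with _ | ⟨φ, l⟩
  · exfalso
    rcases List.map_eq_nil_iff.mp h with h'
    have := Finset.mem_toList.mpr (Finset.mem_univ (Classical.arbitrary V))
    simp [h'] at this
  · show PTSat Z (PTandAux φ l) ↔ _
    rw [PTandAux_sat]
    constructor
    · rintro ⟨h1, h2⟩ t ht
      funext i
      have hi : PTlit s i ∈ φ :: l := by
        rw [← h]
        exact List.mem_map_of_mem (Finset.mem_toList.mpr (Finset.mem_univ i))
      rcases List.mem_cons.mp hi with hi | hi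
      · exact (PTlit_sat Z s i).mp (by rw [hi]; exact h1) t ht
      · exact (PTlit_sat Z s i).mp (h2 _ hi) t ht
    · intro ht
      have key : ∀ ψ ∈ φ :: l, PTSat Z ψ := by
        intro ψ hψ
        rw [← h] at hψ
        rcases List.mem_map.mp hψ with ⟨i, _, rfl⟩
        exact (PTlit_sat Z s i).mpr (fun t htz => by rw [ht t htz])
      exact ⟨key φ (by simp), fun ψ hψ => key ψ (by simp [hψ])⟩

lemma PTthetaStar_list_sat {V : Type} [Fintype V] [Nonempty V]
    (Z : Set (V → Bool)) (l : List (V → Bool)) :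
    PTSat Z (PTtensorList (l.map (fun s => .and (PTdescr s) .ne))) ↔
      Z = {t | t ∈ l} := by
  induction l generalizing Z with
  | nil =>
    show Z = ∅ ↔ _
    simp [Set.eq_empty_iff_forall_notMem]
  | cons s l ih =>
    show (∃ Y W, Z = Y ∪ W ∧ PTSat Y (.and (PTdescr s) .ne) ∧ _) ↔ _
    constructor
    · rintro ⟨Y, W, rfl, ⟨hY1, hY2⟩, hW⟩
      replace hW := (ih W).mp hW
      have hYeq : Y = {s} := by
        rcases Set.nonempty_iff_ne_empty.mpr hY2 with ⟨t, ht⟩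
        apply Set.eq_singleton_iff_nonempty_unique_mem.mpr
        exact ⟨⟨t, ht⟩, fun u hu => (PTdescr_sat Y s).mp hY1 u hu⟩
      rw [hYeq, hW]
      ext t; simp [List.mem_cons]
    · rintro rfl
      refine ⟨{s}, {t | t ∈ l}, ?_, ⟨?_, ?_⟩, (ih _).mpr rfl⟩
      · ext t; simp [List.mem_cons]
      · exact (PTdescr_sat _ s).mpr (by simp)
      · exact Set.singleton_ne_empty s

lemma PTthetaStar_sat {V : Type} [Fintype V] [Nonempty V]
    (Z : Set (V → Bool)) (X : Finset (V → Bool)) :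
    PTSat Z (PTthetaStar X) ↔ Z = ↑X := by
  rw [PTthetaStar, PTthetaStar_list_sat]
  have : {t | t ∈ X.toList} = (↑X : Set (V → Bool)) := by
    ext t; simp [Finset.mem_toList]
  rw [this]

lemma PTborList_sat {V : Type} (Z : Set (V → Bool)) (l : List (PTForm V)) :
    PTSat Z (PTborList l) ↔ ∃ φ ∈ l, PTSat Z φ := by
  induction l with
  | nil =>
    show (Z = ∅ ∧ Z ≠ ∅) ↔ _
    simp
  | cons φ l ih =>
    show PTSat Z φ ∨ PTSat Z (PTborList l) ↔ _
    rw [ih]; simp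

/-- For finite nonempty collections `{X_f : f ∈ F}` and `{Y_g : g ∈ G}` of
teams on a fixed finite (nonempty) index set, `⋁_{f∈F} Θ*_{X_f}` entails
`⋁_{g∈G} Θ*_{Y_g}` if and only if each `X_f` equals some `Y_g`. -/
theorem thetaStar_bor_entailment (V F G : Type) [Fintype V] [Nonempty V]
    [Fintype F] [Nonempty F] [Fintype G] [Nonempty G]
    (Xf : F → Finset (V → Bool)) (Yg : G → Finset (V → Bool)) :
    (∀ Z : Set (V → Bool),
        PTSat Z (PTborList ((Finset.univ : Finset F).toList.map
          (fun f => PTthetaStar (Xf f)))) →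
        PTSat Z (PTborList ((Finset.univ : Finset G).toList.map
          (fun g => PTthetaStar (Yg g))))) ↔
    (∀ f : F, ∃ g : G, Xf f = Yg g) := by
  constructor
  · intro h f
    have hsat : PTSat (↑(Xf f)) (PTborList ((Finset.univ : Finset F).toList.map
        (fun f => PTthetaStar (Xf f)))) := by
      rw [PTborList_sat]
      exact ⟨PTthetaStar (Xf f),
        List.mem_map_of_mem (Finset.mem_toList.mpr (Finset.mem_univ f)),
        (PTthetaStar_sat _ _).mpr rfl⟩
    have := h _ hsat
    rw [PTborList_sat] at this
    rcases this with ⟨φ, hφ, hsatφ⟩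
    rcases List.mem_map.mp hφ with ⟨g, _, rfl⟩
    refine ⟨g, ?_⟩
    have := (PTthetaStar_sat _ _).mp hsatφ
    exact_mod_cast this
  · intro h Z hZ
    rw [PTborList_sat] at hZ ⊢
    rcases hZ with ⟨φ, hφ, hsatφ⟩
    rcases List.mem_map.mp hφ with ⟨f, _, rfl⟩
    rcases h f with ⟨g, hg⟩
    exact ⟨PTthetaStar (Yg g),
      List.mem_map_of_mem (Finset.mem_toList.mpr (Finset.mem_univ g)),
      by rw [PTthetaStar_sat] at hsatφ ⊢; rw [hsatφ, hg]⟩
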